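/- arXiv:1509.07817 — 2 statements merged into one kernel-verified Lean document; each statement's English description precedes it below -/
import Mathlib

section
/- Let A and A' be two torsion abelian groups of cofinite type (i.e., for every positive integer n the n-torsion subgroup is finite). If for every positive integer n the n-torsion subgroups of A and A' have the same cardinality, then A and A' are isomorphic as abelian groups. -/
/-- The `n`-torsion subgroup of an abelian group. -/
def nTorsion (n : ℕ) (A : Type*) [AddCommGroup A] : AddSubgroup A where
  carrier := {x | n • x = 0}
  zero_mem' := by simp
  add_mem' := by
    intro a b ha hb
    simp only [Set.mem_setOf_eq] at *
    rw [smul_add, ha, hb, add_zero]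
  neg_mem' := by
    intro a ha
    simp only [Set.mem_setOf_eq] at *
    rw [smul_neg, ha, neg_zero]

/-- The subgroup `n•A` of an abelian group `A`. -/
def smulTop (n : ℕ) (A : Type*) [AddCommGroup A] : AddSubgroup A where
  carrier := Set.range fun y : A => n • y
  zero_mem' := ⟨0, smul_zero n⟩
  add_mem' := by
    rintro _ _ ⟨a, rfl⟩ ⟨b, rfl⟩
    exact ⟨a + b, smul_add n a b⟩
  neg_mem' := by
    rintro _ ⟨a, rfl⟩
    exact ⟨-a, smul_neg n a⟩

/-- The `ℓ`-primary component of an abelian group: elements of `ℓ`-power order. -/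
def primaryPart (ℓ : ℕ) (A : Type*) [AddCommGroup A] : AddSubgroup A where
  carrier := {x | ∃ k : ℕ, ℓ ^ k • x = 0}
  zero_mem' := ⟨0, smul_zero _⟩
  add_mem' := by
    rintro a b ⟨j, hj⟩ ⟨k, hk⟩
    refine ⟨j + k, ?_⟩
    have ha : ℓ ^ (j + k) • a = 0 := by rw [add_comm, pow_add, mul_smul, hj, smul_zero]
    have hb : ℓ ^ (j + k) • b = 0 := by rw [pow_add, mul_smul, hk, smul_zero]
    rw [smul_add, ha, hb, add_zero]
  neg_mem' := by
    rintro a ⟨k, hk⟩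
    exact ⟨k, by rw [smul_neg, hk, neg_zero]⟩

/-- The group `ℚ/ℤ`. -/
abbrev QZ : Type := ℚ ⧸ AddSubgroup.zmultiples (1 : ℚ)

/-- The Prüfer `ℓ`-group `ℚ_ℓ/ℤ_ℓ`, realized as the `ℓ`-primary part of `ℚ/ℤ`. -/
abbrev Prufer (ℓ : ℕ) : Type := ↥(primaryPart ℓ QZ)

/-- The maximal divisible subgroup of an abelian group. -/
def divisiblePart (A : Type*) [AddCommGroup A] : AddSubgroup A :=
  sSup {H : AddSubgroup A | ∀ n : ℕ, 0 < n → ∀ x ∈ H, ∃ y ∈ H, n • y = x}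

/-- The torsion subgroup of an abelian group. -/
def torsionSub (A : Type*) [AddCommGroup A] : AddSubgroup A where
  carrier := {x | ∃ n : ℕ, 0 < n ∧ n • x = 0}
  zero_mem' := ⟨1, one_pos, smul_zero 1⟩
  add_mem' := by
    rintro a b ⟨j, hj, hja⟩ ⟨k, hk, hkb⟩
    refine ⟨j * k, Nat.mul_pos hj hk, ?_⟩
    have ha : (j * k) • a = 0 := by rw [mul_comm, mul_smul, hja, smul_zero]
    have hb : (j * k) • b = 0 := by rw [mul_smul, hkb, smul_zero]
    rw [smul_add, ha, hb, add_zero]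
  neg_mem' := by
    rintro a ⟨k, hk, hka⟩
    exact ⟨k, hk, by rw [smul_neg, hka, neg_zero]⟩

section Basic
variable {A B : Type*} [AddCommGroup A] [AddCommGroup B]

lemma mem_nTorsion_iff {n : ℕ} {x : A} : x ∈ nTorsion n A ↔ n • x = 0 := Iff.rfl

/-- transport of torsion subgroups along an AddEquiv -/
def nTorsionCongr (e : A ≃+ B) (n : ℕ) : nTorsion n A ≃+ nTorsion n B where
  toFun x := ⟨e x.1, by
    have : n • (e x.1) = e (n • x.1) := (map_nsmul (e : A →+ B) n x.1).symm
    simp [mem_nTorsion_iff, this, mem_nTorsion_iff.mp x.2]⟩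
  invFun y := ⟨e.symm y.1, by
    have : n • (e.symm y.1) = e.symm (n • y.1) := (map_nsmul (e.symm : B →+ A) n y.1).symm
    simp [mem_nTorsion_iff, this, mem_nTorsion_iff.mp y.2]⟩
  left_inv x := by ext; simp
  right_inv y := by ext; simp
  map_add' x y := by ext; simp

/-- torsion of a Pi type -/
def nTorsionPi {ι : Type*} (B : ι → Type*) [∀ i, AddCommGroup (B i)] (n : ℕ) :
    nTorsion n (∀ i, B i) ≃+ ∀ i, nTorsion n (B i) where
  toFun x i := ⟨x.1 i, congrFun (mem_nTorsion_iff.mp x.2) i⟩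
  invFun y := ⟨fun i => (y i).1, funext fun i => (y i).2⟩
  left_inv x := rfl
  right_inv y := rfl
  map_add' x y := rfl

end Basic

/-- count of n-torsion in ZMod m -/
lemma card_nTorsion_zmod (n m : ℕ) (hm : 0 < m) :
    Nat.card (nTorsion n (ZMod m)) = Nat.gcd n m := by
  have : NeZero m := ⟨hm.ne'⟩
  -- nTorsion n (ZMod m) = zmultiples ((m / gcd n m : ℕ) : ZMod m)
  set g := Nat.gcd n m with hg
  have hgpos : 0 < g := Nat.gcd_pos_of_pos_right n hm
  have hgdvd : g ∣ m := Nat.gcd_dvd_right n m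
  have key : nTorsion n (ZMod m) = AddSubgroup.zmultiples ((m / g : ℕ) : ZMod m) := by
    ext x
    simp only [mem_nTorsion_iff, AddSubgroup.mem_zmultiples_iff]
    constructor
    · intro hx
      -- x.val satisfies m ∣ n * x.val
      have hv : (m : ℕ) ∣ n * x.val := by
        have : ((n * x.val : ℕ) : ZMod m) = 0 := by
          push_cast
          rw [ZMod.natCast_val, ZMod.cast_id]
          rw [← nsmul_eq_mul]
          exact hx
        exact (ZMod.natCast_eq_zero_iff _ _).mp this
      -- so m/g ∣ x.val
      have h2 : (m / g) ∣ x.val := by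
        have h3 : m / g ∣ (n / g) * x.val := by
          obtain ⟨c, hc⟩ := hv
          refine ⟨c, ?_⟩
          apply Nat.eq_of_mul_eq_mul_left hgpos
          rw [← Nat.mul_assoc, ← Nat.mul_assoc, Nat.mul_div_cancel' hgdvd,
            Nat.mul_div_cancel' (Nat.gcd_dvd_left n m), hc]
        have hcop : Nat.Coprime (m / g) (n / g) := by
          rw [Nat.coprime_comm]
          exact Nat.coprime_div_gcd_div_gcd hgpos
        exact (Nat.Coprime.dvd_of_dvd_mul_left hcop h3)
      obtain ⟨c, hc⟩ := h2
      refine ⟨(c : ℤ), ?_⟩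
      have : x = ((x.val : ℕ) : ZMod m) := by rw [ZMod.natCast_val, ZMod.cast_id]
      rw [this, hc]
      push_cast
      rw [zsmul_eq_mul]
      push_cast
      ring
    · rintro ⟨c, rfl⟩
      rw [← mem_nTorsion_iff]
      have h0 : ((m / g : ℕ) : ZMod m) ∈ nTorsion n (ZMod m) := by
        rw [mem_nTorsion_iff, nsmul_eq_mul]
        have : ((n * (m / g) : ℕ) : ZMod m) = 0 := by
          rw [ZMod.natCast_eq_zero_iff]
          obtain ⟨d, hd⟩ := Nat.gcd_dvd_left n m
          refine ⟨d, ?_⟩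
          rw [hd, Nat.mul_comm g d, Nat.mul_assoc, Nat.mul_div_cancel' hgdvd, Nat.mul_comm]
        push_cast at this
        exact this
      exact zsmul_mem h0 c
  rw [key, Nat.card_zmultiples, ZMod.addOrderOf_coe _ hm.ne',
    Nat.gcd_eq_right (Nat.div_dvd_of_dvd hgdvd), Nat.div_div_self hgdvd hm.ne']

/-- prod of map of indicator -/
lemma prod_map_ite_count (s : Multiset ℕ) (a c : ℕ) :
    (s.map (fun m => if m = a then c else 1)).prod = c ^ s.count a := by
  induction s using Multiset.induction_on with
  | empty => simp
  | cons x s ih =>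
    rw [Multiset.map_cons, Multiset.prod_cons, ih, Multiset.count_cons]
    by_cases h : x = a
    · simp [h, pow_succ, mul_comm]
    · simp [h, Ne.symm h]

lemma isPP_pos {m : ℕ} (h : ∃ p k, Nat.Prime p ∧ 0 < k ∧ m = p ^ k) : 0 < m := by
  obtain ⟨p, k, hp, -, rfl⟩ := h
  exact pow_pos hp.pos k

/-- key pointwise gcd identity -/
lemma gcd_pow_succ_eq {p : ℕ} (hp : Nat.Prime p) {k : ℕ} (hk : 0 < k) {m : ℕ}
    (hm : ∃ q e, Nat.Prime q ∧ 0 < e ∧ m = q ^ e) (hval : padicValNat p m ≤ k) :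
    Nat.gcd (p ^ k) m = Nat.gcd (p ^ (k - 1)) m * (if m = p ^ k then p else 1) := by
  obtain ⟨q, e, hq, he, rfl⟩ := hm
  haveI : Fact (Nat.Prime p) := ⟨hp⟩
  by_cases hqp : q = p
  · subst hqp
    rw [padicValNat.prime_pow] at hval
    rcases lt_or_eq_of_le hval with hlt | heq
    · have h1 : Nat.gcd (q ^ k) (q ^ e) = q ^ e :=
        Nat.gcd_eq_right (pow_dvd_pow q (le_of_lt hlt))
      have h2 : Nat.gcd (q ^ (k - 1)) (q ^ e) = q ^ e :=
        Nat.gcd_eq_right (pow_dvd_pow q (Nat.le_sub_one_of_lt hlt))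
      have hne : q ^ e ≠ q ^ k := fun hcon =>
        (Nat.lt_irrefl k) (by rwa [Nat.pow_right_injective hq.two_le hcon] at hlt)
      rw [h1, h2, if_neg hne, mul_one]
    · subst heq
      rw [Nat.gcd_self, Nat.gcd_eq_left (pow_dvd_pow q (Nat.sub_le e 1)), if_pos rfl,
        ← pow_succ, Nat.sub_add_cancel he]
  · have hcop : Nat.Coprime p q := (Nat.coprime_primes hp hq).mpr (Ne.symm hqp)
    have h1 : Nat.gcd (p ^ k) (q ^ e) = 1 := Nat.Coprime.pow k e hcop
    have h2 : Nat.gcd (p ^ (k - 1)) (q ^ e) = 1 := Nat.Coprime.pow _ e hcop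
    have hne : q ^ e ≠ p ^ k := by
      intro hcon
      have : p ∣ q ^ e := hcon ▸ dvd_pow_self p hk.ne'
      exact hqp ((Nat.prime_dvd_prime_iff_eq hp hq).mp (hp.dvd_of_dvd_pow this)).symm
    rw [h1, h2, if_neg hne, mul_one]

lemma prod_gcd_pow_eq {p : ℕ} (hp : Nat.Prime p) {k : ℕ} (hk : 0 < k) (s : Multiset ℕ)
    (hs : ∀ m ∈ s, ∃ q e, Nat.Prime q ∧ 0 < e ∧ m = q ^ e)
    (hb : ∀ m ∈ s, padicValNat p m ≤ k) :
    (s.map (Nat.gcd (p ^ k))).prod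
      = (s.map (Nat.gcd (p ^ (k - 1)))).prod * p ^ s.count (p ^ k) := by
  have : (s.map (Nat.gcd (p ^ k))).prod
      = (s.map (fun m => Nat.gcd (p ^ (k-1)) m * (if m = p ^ k then p else 1))).prod := by
    apply congrArg Multiset.prod
    exact Multiset.map_congr rfl (fun m hm => gcd_pow_succ_eq hp hk (hs m hm) (hb m hm))
  rw [this, Multiset.prod_map_mul, prod_map_ite_count]

lemma prod_gcd_pos (n : ℕ) (s : Multiset ℕ) (hs : ∀ m ∈ s, 0 < m) :
    0 < (s.map (Nat.gcd n)).prod := by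
  apply Multiset.prod_pos
  intro a ha
  obtain ⟨m, hm, rfl⟩ := Multiset.mem_map.mp ha
  exact Nat.gcd_pos_of_pos_right n (hs m hm)

/-- THE combinatorial heart: multisets of prime powers with equal gcd-products are equal. -/
lemma multiset_eq_of_gcd_prod_eq :
    ∀ N (s t : Multiset ℕ), Multiset.card s = N →
    (∀ m ∈ s, ∃ p k, Nat.Prime p ∧ 0 < k ∧ m = p ^ k) →
    (∀ m ∈ t, ∃ p k, Nat.Prime p ∧ 0 < k ∧ m = p ^ k) →
    (∀ n : ℕ, 0 < n → (s.map (Nat.gcd n)).prod = (t.map (Nat.gcd n)).prod) →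
    s = t := by
  intro N
  induction N using Nat.strong_induction_on with
  | _ N ih =>
    intro s t hcard hs ht h
    rcases Multiset.empty_or_exists_mem s with rfl | ⟨m0, hm0⟩
    · -- s empty: show t empty
      by_contra hne
      obtain ⟨m, hm⟩ := Multiset.exists_mem_of_ne_zero (fun h0 => hne (h0 ▸ rfl))
      have h1 : Nat.gcd m m ≤ (t.map (Nat.gcd m)).prod :=
        Multiset.single_le_prod
          (fun x hx => by
            obtain ⟨m', hm', rfl⟩ := Multiset.mem_map.mp hx
            exact Nat.gcd_pos_of_pos_right m (isPP_pos (ht m' hm')))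
          _ (Multiset.mem_map_of_mem _ hm)
      rw [Nat.gcd_self] at h1
      have h2 := h m (isPP_pos (ht m hm))
      simp only [Multiset.map_zero, Multiset.prod_zero] at h2
      obtain ⟨p, k, hp, hk, rfl⟩ := ht m hm
      have : (1 : ℕ) < p ^ k := Nat.one_lt_pow hk.ne' hp.one_lt
      omega
    · -- s nonempty
      obtain ⟨p, e, hp, he, hme⟩ := hs m0 hm0
      haveI : Fact (Nat.Prime p) := ⟨hp⟩
      have hm0u : m0 ∈ s + t := Multiset.mem_add.mpr (Or.inl hm0)
      have hune : (s + t).toFinset.Nonempty := ⟨m0, Multiset.mem_toFinset.mpr hm0u⟩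
      obtain ⟨m1, hm1u, hm1⟩ := Finset.exists_mem_eq_sup (s + t).toFinset hune (padicValNat p)
      rw [Multiset.mem_toFinset] at hm1u
      have hbound : ∀ m ∈ s + t, padicValNat p m ≤ padicValNat p m1 :=
        fun m hm => hm1 ▸ Finset.le_sup (Multiset.mem_toFinset.mpr hm)
      set k := padicValNat p m1 with hkdef
      have hk : 0 < k := by
        have := hbound m0 hm0u
        rw [hme, padicValNat.prime_pow] at this
        omega
      have hm1pp : ∃ q e, Nat.Prime q ∧ 0 < e ∧ m1 = q ^ e := by
        rcases Multiset.mem_add.mp hm1u with h' | h'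
        · exact hs m1 h'
        · exact ht m1 h'
      have hm1eq : m1 = p ^ k := by
        obtain ⟨q, e1, hq, he1, hqe⟩ := hm1pp
        have hpd : p ∣ m1 := by
          by_contra hnd
          rw [hkdef, padicValNat.eq_zero_of_not_dvd hnd] at hk
          omega
        have hpq : p = q := (Nat.prime_dvd_prime_iff_eq hp hq).mp
          (hp.dvd_of_dvd_pow (hqe ▸ hpd))
        have hke : k = e1 := by rw [hkdef, hqe, ← hpq, padicValNat.prime_pow]
        rw [hqe, ← hpq, hke]
      -- counts are equal
      have hppos : 0 < p ^ k := pow_pos hp.pos k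
      have hppos' : 0 < p ^ (k - 1) := pow_pos hp.pos _
      have hps := prod_gcd_pow_eq hp hk s hs
        (fun m hm => hbound m (Multiset.mem_add.mpr (Or.inl hm)))
      have hpt := prod_gcd_pow_eq hp hk t ht
        (fun m hm => hbound m (Multiset.mem_add.mpr (Or.inr hm)))
      have heq1 := h (p ^ k) hppos
      have heq2 := h (p ^ (k - 1)) hppos'
      rw [hps, hpt, heq2] at heq1
      have hcount : s.count (p ^ k) = t.count (p ^ k) := by
        have hbase : 0 < (Multiset.map (Nat.gcd (p ^ (k - 1))) t).prod :=
          prod_gcd_pos _ t (fun m hm => isPP_pos (ht m hm))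
        have := Nat.eq_of_mul_eq_mul_left hbase heq1
        exact Nat.pow_right_injective hp.two_le this
      have hmem : p ^ k ∈ s ∧ p ^ k ∈ t := by
        rcases Multiset.mem_add.mp hm1u with h' | h'
        · refine ⟨hm1eq ▸ h', Multiset.count_pos.mp ?_⟩
          rw [← hcount]
          exact Multiset.count_pos.mpr (hm1eq ▸ h')
        · refine ⟨Multiset.count_pos.mp ?_, hm1eq ▸ h'⟩
          rw [hcount]
          exact Multiset.count_pos.mpr (hm1eq ▸ h')
      -- erase and recurse
      have hspos : 0 < Multiset.card s := Multiset.card_pos_iff_exists_mem.mpr ⟨m0, hm0⟩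
      have hcard' : Multiset.card (s.erase (p ^ k)) < N := by
        rw [Multiset.card_erase_of_mem hmem.1, ← hcard]
        exact Nat.pred_lt (by omega)
      have h' : ∀ n : ℕ, 0 < n →
          ((s.erase (p ^ k)).map (Nat.gcd n)).prod = ((t.erase (p ^ k)).map (Nat.gcd n)).prod := by
        intro n hn
        have e1 := Multiset.prod_map_erase (f := Nat.gcd n) hmem.1
        have e2 := Multiset.prod_map_erase (f := Nat.gcd n) hmem.2
        have hgpos : 0 < Nat.gcd n (p ^ k) := Nat.gcd_pos_of_pos_left _ hn
        apply Nat.eq_of_mul_eq_mul_left hgpos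
        rw [e1, e2, h n hn]
      have key := ih _ hcard' (s.erase (p ^ k)) (t.erase (p ^ k)) rfl
        (fun m hm => hs m (Multiset.mem_of_mem_erase hm))
        (fun m hm => ht m (Multiset.mem_of_mem_erase hm)) h'
      conv_lhs => rw [← Multiset.cons_erase hmem.1]
      conv_rhs => rw [← Multiset.cons_erase hmem.2]
      rw [key]

section PiEquiv
variable {ι ι' : Type*}

/-- `Equiv.piCongrLeft'` as an `AddEquiv`. -/
def addPiCongrLeft' (R : ι → Type*) (e : ι ≃ ι') [∀ i, AddCommMonoid (R i)] :
    ((i : ι) → R i) ≃+ ((i : ι') → R (e.symm i)) :=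
  { Equiv.piCongrLeft' R e with map_add' := fun _ _ => rfl }

/-- `Equiv.piCongrLeft` as an `AddEquiv`. -/
def addPiCongrLeft (S : ι' → Type*) (e : ι ≃ ι') [∀ i, AddCommMonoid (S i)] :
    ((i : ι) → S (e i)) ≃+ ((i : ι') → S i) :=
  (addPiCongrLeft' S e.symm).symm

/-- Dropping subsingleton components of a Pi type. -/
def piDropSubsingleton (B : ι → Type*) [∀ i, AddCommMonoid (B i)] (P : ι → Prop)
    [DecidablePred P] (hB : ∀ i, ¬ P i → Subsingleton (B i)) :
    ((i : ι) → B i) ≃+ ((i : {i // P i}) → B i.1) where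
  toFun f i := f i.1
  invFun g i := if h : P i then g ⟨i, h⟩ else 0
  left_inv f := by
    funext i
    by_cases h : P i
    · simp [h]
    · haveI := hB i h
      exact Subsingleton.elim _ _
  right_inv g := by
    funext i
    simp [i.2]
  map_add' f g := rfl

end PiEquiv

/-- congruence of ZMod along an equality -/
def zmodCongr {a b : ℕ} (h : a = b) : ZMod a ≃+ ZMod b := by subst h; exact AddEquiv.refl _

/-- counting torsion in a finite product of ZMod's -/
lemma card_nTorsion_pi_zmod {ι : Type} [Fintype ι] (m : ι → ℕ) (hm : ∀ i, 0 < m i) (n : ℕ) :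
    Nat.card (nTorsion n ((i : ι) → ZMod (m i))) = ∏ i, Nat.gcd n (m i) := by
  rw [Nat.card_congr (nTorsionPi (fun i => ZMod (m i)) n).toEquiv, Nat.card_pi]
  exact Finset.prod_congr rfl fun i _ => card_nTorsion_zmod n (m i) (hm i)

/-- From equal multisets of values to an isomorphism of products of `ZMod`s. -/
lemma pi_zmod_equiv_of_multiset_eq {ι κ : Type} [Fintype ι] [Fintype κ]
    (m : ι → ℕ) (m' : κ → ℕ)
    (h : Multiset.map m Finset.univ.val = Multiset.map m' Finset.univ.val) :
    Nonempty (((i : ι) → ZMod (m i)) ≃+ ((j : κ) → ZMod (m' j))) := by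
  classical
  have hfib : ∀ v : ℕ, Nonempty ({i // m i = v} ≃ {j // m' j = v}) := by
    intro v
    rw [← Fintype.card_eq]
    rw [Fintype.card_subtype, Fintype.card_subtype]
    have h1 := congrArg (Multiset.count v) h
    rw [Multiset.count_map, Multiset.count_map] at h1
    have e1 : (Finset.filter (fun x => m x = v) Finset.univ).card
        = Multiset.card (Multiset.filter (fun a => v = m a) Finset.univ.val) := by
      rw [Finset.card_def, Finset.filter_val]
      congr 1
      exact Multiset.filter_congr (fun x _ => eq_comm)
    have e2 : (Finset.filter (fun x => m' x = v) Finset.univ).card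
        = Multiset.card (Multiset.filter (fun a => v = m' a) Finset.univ.val) := by
      rw [Finset.card_def, Finset.filter_val]
      congr 1
      exact Multiset.filter_congr (fun x _ => eq_comm)
    rw [e1, e2, h1]
  let σ : ι ≃ κ := Equiv.ofFiberEquiv (fun v => (hfib v).some)
  have hσ : ∀ i, m' (σ i) = m i := fun i => Equiv.ofFiberEquiv_map _ i
  refine ⟨AddEquiv.trans ?_ (addPiCongrLeft (fun j => ZMod (m' j)) σ)⟩
  exact AddEquiv.piCongrRight (fun i => zmodCongr (hσ i).symm)

/-- Any finite abelian group is a product of `ZMod (p^k)` with `k > 0`. -/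
lemma exists_pi_primePow (G : Type) [AddCommGroup G] [Finite G] :
    ∃ (ι : Type) (_ : Fintype ι) (m : ι → ℕ),
      (∀ i, ∃ p k, Nat.Prime p ∧ 0 < k ∧ m i = p ^ k) ∧
      Nonempty (G ≃+ ((i : ι) → ZMod (m i))) := by
  classical
  obtain ⟨ι, hι, p, hp, e, ⟨f⟩⟩ := AddCommGroup.equiv_directSum_zmod_of_finite G
  have hB : ∀ i, ¬ (e i ≠ 0) → Subsingleton (ZMod (p i ^ e i)) := by
    intro i hi
    rw [not_ne_iff.mp hi, pow_zero]
    infer_instance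
  refine ⟨{i // e i ≠ 0}, inferInstance, fun i => p i.1 ^ e i.1,
    fun i => ⟨p i.1, e i.1, hp i.1, Nat.pos_of_ne_zero i.2, rfl⟩,
    ⟨(f.trans (DirectSum.addEquivProd _)).trans
      (piDropSubsingleton (fun i => ZMod (p i ^ e i)) (fun i => e i ≠ 0) hB)⟩⟩

/-- Finite abelian groups with equal torsion counts are isomorphic. -/
lemma finite_addEquiv_of_card_nTorsion_eq (G H : Type) [AddCommGroup G] [AddCommGroup H]
    [Finite G] [Finite H]
    (h : ∀ n : ℕ, 0 < n → Nat.card (nTorsion n G) = Nat.card (nTorsion n H)) :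
    Nonempty (G ≃+ H) := by
  obtain ⟨ι, hι, m, hm, ⟨eG⟩⟩ := exists_pi_primePow G
  obtain ⟨κ, hκ, m', hm', ⟨eH⟩⟩ := exists_pi_primePow H
  have hmpos : ∀ i, 0 < m i := fun i => isPP_pos (hm i)
  have hmpos' : ∀ j, 0 < m' j := fun j => isPP_pos (hm' j)
  have hprod : ∀ n : ℕ, 0 < n → (∏ i, Nat.gcd n (m i)) = ∏ j, Nat.gcd n (m' j) := by
    intro n hn
    rw [← card_nTorsion_pi_zmod m hmpos n, ← card_nTorsion_pi_zmod m' hmpos' n,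
      ← Nat.card_congr (nTorsionCongr eG n).toEquiv, ← Nat.card_congr (nTorsionCongr eH n).toEquiv]
    exact h n hn
  have hms : Multiset.map m Finset.univ.val = Multiset.map m' Finset.univ.val := by
    apply multiset_eq_of_gcd_prod_eq (Multiset.card (Multiset.map m Finset.univ.val)) _ _ rfl
    · intro x hx
      obtain ⟨i, -, rfl⟩ := Multiset.mem_map.mp hx
      exact hm i
    · intro x hx
      obtain ⟨j, -, rfl⟩ := Multiset.mem_map.mp hx
      exact hm' j
    · intro n hn
      rw [Multiset.map_map, Multiset.map_map]
      rw [← Finset.prod_eq_multiset_prod, ← Finset.prod_eq_multiset_prod]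
      exact hprod n hn
  obtain ⟨eP⟩ := pi_zmod_equiv_of_multiset_eq m m' hms
  exact ⟨(eG.trans eP).trans eH.symm⟩

section Restrict
variable {A A' : Type} [AddCommGroup A] [AddCommGroup A']

lemma nTorsion_le {M N : ℕ} (h : M ∣ N) : nTorsion M A ≤ nTorsion N A := by
  intro x hx
  obtain ⟨c, rfl⟩ := h
  rw [mem_nTorsion_iff] at hx ⊢
  rw [mul_nsmul, hx, smul_zero]

/-- the n-torsion of the N-torsion subgroup is the gcd-torsion -/
def torsionTorsionEquiv (n N : ℕ) :
    nTorsion n (nTorsion N A) ≃ nTorsion (Nat.gcd n N) A where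
  toFun x := ⟨x.1.1, by
    rw [mem_nTorsion_iff]
    have hn : n • x.1.1 = 0 := by
      have := mem_nTorsion_iff.mp x.2
      exact congrArg Subtype.val this
    have hN : N • x.1.1 = 0 := mem_nTorsion_iff.mp x.1.2
    have hb := Nat.gcd_eq_gcd_ab n N
    have : ((Nat.gcd n N : ℕ) : ℤ) • x.1.1 = 0 := by
      have h1 : (n : ℤ) • x.1.1 = 0 := by rw [natCast_zsmul, hn]
      have h2 : (N : ℤ) • x.1.1 = 0 := by rw [natCast_zsmul, hN]
      rw [hb, add_smul, mul_comm (n : ℤ), mul_comm (N : ℤ), mul_smul, mul_smul, h1, h2,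
        smul_zero, smul_zero, add_zero]
    rwa [natCast_zsmul] at this⟩
  invFun y := ⟨⟨y.1, nTorsion_le (Nat.gcd_dvd_right n N) y.2⟩, by
    rw [mem_nTorsion_iff]
    apply Subtype.ext
    have : n • y.1 = 0 := nTorsion_le (Nat.gcd_dvd_left n N) y.2
    exact this⟩
  left_inv x := by ext; rfl
  right_inv y := by ext; rfl

/-- restriction homomorphism between torsion levels -/
def resHom {M N : ℕ} (h : M ∣ N) (e : nTorsion N A ≃+ nTorsion N A') :
    nTorsion M A →+ nTorsion M A' where
  toFun x := ⟨(e ⟨x.1, nTorsion_le h x.2⟩).1, by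
    rw [mem_nTorsion_iff]
    have h1 : (M • e ⟨x.1, nTorsion_le h x.2⟩) = e (M • ⟨x.1, nTorsion_le h x.2⟩) :=
      (map_nsmul (e : nTorsion N A →+ nTorsion N A') M _).symm
    have h2 : (M • (⟨x.1, nTorsion_le h x.2⟩ : nTorsion N A)) = 0 := by
      apply Subtype.ext
      exact mem_nTorsion_iff.mp x.2
    have : M • (e ⟨x.1, nTorsion_le h x.2⟩).1 = (M • e ⟨x.1, nTorsion_le h x.2⟩).1 := rfl
    rw [this, h1, h2, map_zero]
    rfl⟩
  map_zero' := by
    apply Subtype.ext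
    have : (⟨(0 : nTorsion M A).1, nTorsion_le h (0 : nTorsion M A).2⟩ : nTorsion N A) = 0 :=
      Subtype.ext rfl
    simp only [this, map_zero]
    rfl
  map_add' x y := by
    apply Subtype.ext
    have : (⟨(x + y).1, nTorsion_le h (x + y).2⟩ : nTorsion N A)
        = ⟨x.1, nTorsion_le h x.2⟩ + ⟨y.1, nTorsion_le h y.2⟩ := Subtype.ext rfl
    simp only [this, map_add]
    rfl

lemma resHom_injective {M N : ℕ} (h : M ∣ N) (e : nTorsion N A ≃+ nTorsion N A') :
    Function.Injective (resHom h e) := by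
  intro x y hxy
  have h1 := congrArg Subtype.val hxy
  have h2 : e ⟨x.1, nTorsion_le h x.2⟩ = e ⟨y.1, nTorsion_le h y.2⟩ := Subtype.ext h1
  have h3 := e.injective h2
  have h4 := congrArg Subtype.val h3
  exact Subtype.ext h4

/-- restriction isomorphism -/
noncomputable def resIso {M N : ℕ} (h : M ∣ N)
    (hf : Finite (nTorsion M A'))
    (hc : Nat.card (nTorsion M A) = Nat.card (nTorsion M A'))
    (e : nTorsion N A ≃+ nTorsion N A') :
    nTorsion M A ≃+ nTorsion M A' :=
  haveI := hf
  AddEquiv.ofBijective (resHom h e)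
    ((Nat.bijective_iff_injective_and_card _).mpr ⟨resHom_injective h e, hc⟩)

lemma resIso_apply {M N : ℕ} (h : M ∣ N)
    (hf : Finite (nTorsion M A'))
    (hc : Nat.card (nTorsion M A) = Nat.card (nTorsion M A'))
    (e : nTorsion N A ≃+ nTorsion N A') (x : nTorsion M A) :
    (resIso h hf hc e x).1 = (e ⟨x.1, nTorsion_le h x.2⟩).1 := rfl

end Restrict

open CategoryTheory in
lemma nat_inverse_system_nonempty (S : ℕ → Type) [∀ k, Finite (S k)] [∀ k, Nonempty (S k)]
    (r : ∀ k l : ℕ, k ≤ l → S l → S k)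
    (hr : ∀ k x, r k k le_rfl x = x)
    (hrr : ∀ k l m (h1 : k ≤ l) (h2 : l ≤ m) x, r k l h1 (r l m h2 x) = r k m (h1.trans h2) x) :
    ∃ u : ∀ k, S k, ∀ k l (h : k ≤ l), r k l h (u l) = u k := by
  let F : ℕᵒᵖ ⥤ Type := {
    obj := fun j => S j.unop
    map := fun {j j'} f => TypeCat.ofHom (r j'.unop j.unop (leOfHom f.unop))
    map_id := fun j => by ext x; exact hr j.unop x
    map_comp := fun {j j' j''} f g => by ext x; exact
      (hrr j''.unop j'.unop j.unop (leOfHom g.unop) (leOfHom f.unop) x).symm }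
  haveI : ∀ j : ℕᵒᵖ, Finite (F.obj j) := fun j => inferInstanceAs (Finite (S j.unop))
  haveI : ∀ j : ℕᵒᵖ, Nonempty (F.obj j) := fun j => inferInstanceAs (Nonempty (S j.unop))
  obtain ⟨u, hu⟩ := nonempty_sections_of_finite_inverse_system F
  exact ⟨fun k => u (Opposite.op k), fun k l h => by have := hu (homOfLE h).op; exact this⟩


/-- two torsion abelian groups of cofinite type with `n`-torsion subgroups
of the same cardinality for every `n > 0` are isomorphic. -/
theorem stmt_0 {A A' : Type} [AddCommGroup A] [AddCommGroup A']
    (htors : ∀ x : A, ∃ n : ℕ, 0 < n ∧ n • x = 0)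
    (htors' : ∀ x : A', ∃ n : ℕ, 0 < n ∧ n • x = 0)
    (hfin : ∀ n : ℕ, 0 < n → Finite (nTorsion n A))
    (hfin' : ∀ n : ℕ, 0 < n → Finite (nTorsion n A'))
    (hcard : ∀ n : ℕ, 0 < n → Nat.card (nTorsion n A) = Nat.card (nTorsion n A')) :
    Nonempty (A ≃+ A') := by
  classical
  have hfA : ∀ k : ℕ, Finite (nTorsion (Nat.factorial k) A) :=
    fun k => hfin _ (Nat.factorial_pos k)
  have hfA' : ∀ k : ℕ, Finite (nTorsion (Nat.factorial k) A') :=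
    fun k => hfin' _ (Nat.factorial_pos k)
  -- level isomorphisms exist
  have hiso : ∀ N : ℕ, 0 < N → Nonempty (nTorsion N A ≃+ nTorsion N A') := by
    intro N hN
    haveI : Finite (nTorsion N A) := hfin N hN
    haveI : Finite (nTorsion N A') := hfin' N hN
    apply finite_addEquiv_of_card_nTorsion_eq
    intro n hn
    have hg : 0 < Nat.gcd n N := Nat.gcd_pos_of_pos_right n hN
    rw [Nat.card_congr (torsionTorsionEquiv n N),
      Nat.card_congr (torsionTorsionEquiv (A := A') n N)]
    exact hcard _ hg
  -- the inverse system of isomorphisms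
  let S : ℕ → Type := fun k => nTorsion (Nat.factorial k) A ≃+ nTorsion (Nat.factorial k) A'
  haveI hSfin : ∀ k, Finite (S k) := by
    intro k
    haveI := hfA k
    haveI := hfA' k
    exact Finite.of_injective (fun e => (e : nTorsion (Nat.factorial k) A →
      nTorsion (Nat.factorial k) A')) DFunLike.coe_injective
  haveI hSne : ∀ k, Nonempty (S k) := fun k => hiso _ (Nat.factorial_pos k)
  have hcard' : ∀ k : ℕ, Nat.card (nTorsion (Nat.factorial k) A)
      = Nat.card (nTorsion (Nat.factorial k) A') := fun k => hcard _ (Nat.factorial_pos k)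
  obtain ⟨u, hu⟩ := nat_inverse_system_nonempty S
    (fun k l h e => resIso (Nat.factorial_dvd_factorial h) (hfA' k) (hcard' k) e)
    (fun k e => by
      apply AddEquiv.ext; intro x
      apply Subtype.ext
      rw [resIso_apply])
    (fun k l m h1 h2 e => by
      apply AddEquiv.ext; intro x
      apply Subtype.ext
      rw [resIso_apply, resIso_apply, resIso_apply])
  -- membership of each point in its factorial torsion level
  have hmem : ∀ x : A, x ∈ nTorsion (Nat.factorial ((htors x).choose)) A := by
    intro x
    obtain ⟨hn, hx⟩ := (htors x).choose_spec
    exact nTorsion_le (Nat.dvd_factorial hn le_rfl) hx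
  -- coherence
  have aux : ∀ (k l : ℕ) (h : k ≤ l) (x : A) (hx : x ∈ nTorsion (Nat.factorial k) A),
      ((u k) ⟨x, hx⟩).1
        = ((u l) ⟨x, nTorsion_le (Nat.factorial_dvd_factorial h) hx⟩).1 := by
    intro k l h x hx
    rw [← hu k l h]
    exact resIso_apply _ _ _ _ _
  have coh : ∀ (k l : ℕ) (x : A) (hx : x ∈ nTorsion (Nat.factorial k) A)
      (hy : x ∈ nTorsion (Nat.factorial l) A),
      ((u k) ⟨x, hx⟩).1 = ((u l) ⟨x, hy⟩).1 := by
    intro k l x hx hy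
    calc ((u k) ⟨x, hx⟩).1
        = ((u (max k l)) ⟨x, nTorsion_le
            (Nat.factorial_dvd_factorial (le_max_left k l)) hx⟩).1 :=
          aux k (max k l) (le_max_left k l) x hx
      _ = ((u l) ⟨x, hy⟩).1 := by
          have h2 := aux l (max k l) (le_max_right k l) x hy
          rw [h2]
  -- the glued map
  let f : A → A' := fun x => ((u ((htors x).choose)) ⟨x, hmem x⟩).1
  have fadd : ∀ x y : A, f (x + y) = f x + f y := by
    intro x y
    set C := max (max ((htors x).choose) ((htors y).choose) ) ((htors (x + y)).choose) with hC
    have hx : x ∈ nTorsion (Nat.factorial C) A :=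
      nTorsion_le (Nat.factorial_dvd_factorial
        ((le_max_left _ _).trans (le_max_left _ _))) (hmem x)
    have hy : y ∈ nTorsion (Nat.factorial C) A :=
      nTorsion_le (Nat.factorial_dvd_factorial
        ((le_max_right _ _).trans (le_max_left _ _))) (hmem y)
    have hxy : x + y ∈ nTorsion (Nat.factorial C) A :=
      nTorsion_le (Nat.factorial_dvd_factorial (le_max_right _ _)) (hmem (x + y))
    show ((u ((htors (x + y)).choose)) ⟨x + y, hmem (x + y)⟩).1
      = ((u ((htors x).choose)) ⟨x, hmem x⟩).1 + ((u ((htors y).choose)) ⟨y, hmem y⟩).1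
    rw [coh ((htors (x + y)).choose) C (x + y) (hmem (x + y)) hxy,
      coh ((htors x).choose) C x (hmem x) hx,
      coh ((htors y).choose) C y (hmem y) hy]
    have hsum : (⟨x + y, hxy⟩ : nTorsion (Nat.factorial C) A) = ⟨x, hx⟩ + ⟨y, hy⟩ :=
      Subtype.ext rfl
    rw [hsum, map_add]
    rfl
  let F : A →+ A' := AddMonoidHom.mk' f fadd
  have hinj : Function.Injective F := by
    rw [injective_iff_map_eq_zero]
    intro x hx
    have h1 : u ((htors x).choose) ⟨x, hmem x⟩ = 0 := Subtype.ext hx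
    have h2 : (⟨x, hmem x⟩ : nTorsion (Nat.factorial ((htors x).choose)) A) = 0 :=
      (u ((htors x).choose)).injective (by rw [h1, map_zero])
    exact congrArg Subtype.val h2
  have hsurj : Function.Surjective F := by
    intro y
    obtain ⟨hm, hy⟩ := (htors' y).choose_spec
    have hymem : y ∈ nTorsion (Nat.factorial ((htors' y).choose)) A' :=
      nTorsion_le (Nat.dvd_factorial hm le_rfl) hy
    set xx := (u ((htors' y).choose)).symm ⟨y, hymem⟩ with hxx
    refine ⟨xx.1, ?_⟩
    show ((u ((htors xx.1).choose)) ⟨xx.1, hmem xx.1⟩).1 = y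
    rw [coh ((htors xx.1).choose) ((htors' y).choose) xx.1 (hmem xx.1) xx.2]
    have h3 : (⟨xx.1, xx.2⟩ : nTorsion (Nat.factorial ((htors' y).choose)) A) = xx :=
      Subtype.ext rfl
    rw [h3, hxx, AddEquiv.apply_symm_apply]
  exact ⟨AddEquiv.ofBijective F ⟨hinj, hsurj⟩⟩
end

section
/- Let 0 → F → R → T^m × T₀ → 0 be an exact sequence of abelian groups with F finite and m ≥ 1. Assume that for a positive integer n all n-torsion subgroups and mod-n quotients occurring are finite, and that |{x∈R : n•x=0}|/|R/nR| = n^{-a} and |{x∈T₀ : n•x=0}|/|T₀/nT₀| = n^{-b} for natural numbers a, b with a ≥ b and m | (a - b). Then |{x∈T : n•x=0}|/|T/nT| = n^{-(a-b)/m}. -/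
namespace Stmt17Aux

open AddSubgroup QuotientAddGroup

variable (n : ℕ) {A B : Type*} [AddCommGroup A] [AddCommGroup B]

/-- Multiplication by `n` as an additive monoid hom. -/
def nsmulHom (A : Type*) [AddCommGroup A] : A →+ A where
  toFun x := n • x
  map_zero' := smul_zero n
  map_add' a b := smul_add n a b

lemma mem_smulTop {x : A} : x ∈ smulTop n A ↔ ∃ y, n • y = x := Iff.rfl

lemma mem_nTorsion {x : A} : x ∈ nTorsion n A ↔ n • x = 0 := Iff.rfl

lemma card_eq_range_mul_ker (h : A →+ B) :
    Nat.card A = Nat.card h.range * Nat.card h.ker := by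
  rw [AddSubgroup.card_eq_card_quotient_mul_card_addSubgroup h.ker,
      Nat.card_congr (QuotientAddGroup.quotientKerEquivRange h).toEquiv]

/-- The key counting identity: for an extension with finite kernel, the
torsion/cotorsion ratios of the middle and right groups agree. -/
lemma star {F R S : Type*} [AddCommGroup F] [AddCommGroup R] [AddCommGroup S] [Finite F]
    (f : F →+ R) (g : R →+ S) (hg : Function.Surjective g)
    (hex : f.range = g.ker) (n : ℕ) :
    Nat.card (R ⧸ smulTop n R) * Nat.card (nTorsion n S)
      = Nat.card (S ⧸ smulTop n S) * Nat.card (nTorsion n R) := by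
  set K : AddSubgroup R := f.range with hKdef
  haveI hKfin : Finite K := Finite.of_surjective f.rangeRestrict f.rangeRestrict_surjective
  set N : AddSubgroup R := smulTop n R with hNdef
  set P : AddSubgroup R := K.comap (nsmulHom n R) with hPdef
  have hKP : K ≤ P := fun x hx => by
    show n • x ∈ K
    exact nsmul_mem hx n
  -- the restricted maps
  set g' : ↥P →+ S := g.comp P.subtype with hg'def
  set μ' : ↥P →+ R := (nsmulHom n R).comp P.subtype with hμ'def
  have hg'range : g'.range = nTorsion n S := by
    ext s
    constructor
    · rintro ⟨⟨r, hr⟩, rfl⟩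
      show n • g' (⟨r, hr⟩ : ↥P) = 0
      have hr' : n • r ∈ g.ker := hex ▸ hr
      show n • g r = 0
      rw [← map_nsmul]
      exact hr'
    · intro hs
      obtain ⟨r, rfl⟩ := hg s
      have : n • r ∈ K := by
        rw [hex, AddMonoidHom.mem_ker, map_nsmul]
        exact hs
      exact ⟨⟨r, this⟩, rfl⟩
  have hg'ker : Nat.card g'.ker = Nat.card K := by
    have : g'.ker = K.addSubgroupOf P := by
      ext ⟨x, hx⟩
      show g x = 0 ↔ x ∈ K
      rw [hex, AddMonoidHom.mem_ker]
    rw [this]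
    exact Nat.card_congr (addSubgroupOfEquivOfLe hKP).toEquiv
  have hμ'range : μ'.range = K ⊓ N := by
    ext x
    constructor
    · rintro ⟨⟨r, hr⟩, rfl⟩
      exact ⟨hr, ⟨r, rfl⟩⟩
    · rintro ⟨hxK, ⟨y, rfl⟩⟩
      exact ⟨⟨y, hxK⟩, rfl⟩
  have hμ'ker : Nat.card μ'.ker = Nat.card (nTorsion n R) := by
    have hTP : nTorsion n R ≤ P := fun x hx => by
      show n • x ∈ K
      rw [show n • x = 0 from hx]
      exact zero_mem K
    have : μ'.ker = (nTorsion n R).addSubgroupOf P := by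
      ext ⟨x, hx⟩
      show n • x = 0 ↔ n • x = 0
      rfl
    rw [this]
    exact Nat.card_congr (addSubgroupOfEquivOfLe hTP).toEquiv
  -- two expressions for Nat.card P
  have eqP1 : Nat.card P = Nat.card (nTorsion n S) * Nat.card K := by
    rw [card_eq_range_mul_ker g', hg'range, hg'ker]
  have eqP2 : Nat.card P = Nat.card (↥(K ⊓ N)) * Nat.card (nTorsion n R) := by
    rw [card_eq_range_mul_ker μ', hμ'range, hμ'ker]
  -- the cokernel side
  have hNle : N ≤ (smulTop n S).comap g := by
    rintro x ⟨y, rfl⟩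
    exact ⟨g y, (map_nsmul g n y).symm⟩
  set χ : (R ⧸ N) →+ (S ⧸ smulTop n S) :=
    QuotientAddGroup.map N (smulTop n S) g hNle with hχdef
  have hχsurj : Function.Surjective χ := by
    intro y
    obtain ⟨s, rfl⟩ := QuotientAddGroup.mk_surjective y
    obtain ⟨r, rfl⟩ := hg s
    exact ⟨QuotientAddGroup.mk r, QuotientAddGroup.map_mk N (smulTop n S) g hNle r⟩
  set φ : ↥K →+ (R ⧸ N) := (QuotientAddGroup.mk' N).comp K.subtype with hφdef
  have hsup : (smulTop n S).comap g = K ⊔ N := by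
    ext r
    constructor
    · rintro hrs
      obtain ⟨s, hs⟩ := hrs
      obtain ⟨r', rfl⟩ := hg s
      have hs' : n • g r' = g r := hs
      have hk : r - n • r' ∈ K := by
        rw [hex, AddMonoidHom.mem_ker, map_sub, map_nsmul, hs', sub_self]
      have hr : r = (r - n • r') + n • r' := by abel
      rw [hr]
      exact add_mem (le_sup_left (α := AddSubgroup R) (a := K) (b := N) hk)
        (le_sup_right (α := AddSubgroup R) (a := K) (b := N) ⟨r', rfl⟩)
    · intro hr
      obtain ⟨y, hy, z, hz, rfl⟩ := AddSubgroup.mem_sup.mp hr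
      obtain ⟨w, rfl⟩ := hz
      have hy0 : g y = 0 := by
        have := hex ▸ hy
        exact this
      refine ⟨g w, ?_⟩
      show n • g w = g (y + n • w)
      rw [map_add, hy0, zero_add, map_nsmul]
  have hχker : χ.ker = φ.range := by
    ext x
    obtain ⟨r, rfl⟩ := QuotientAddGroup.mk_surjective x
    constructor
    · intro hx
      have hx' : g r ∈ smulTop n S := by
        have : χ (QuotientAddGroup.mk r) = 0 := hx
        rw [hχdef, QuotientAddGroup.map_mk] at this
        exact (QuotientAddGroup.eq_zero_iff (g r)).mp this
      have hr : r ∈ K ⊔ N := by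
        rw [← hsup]
        exact hx'
      obtain ⟨y, hy, z, hz, hyz⟩ := AddSubgroup.mem_sup.mp hr
      refine ⟨⟨y, hy⟩, ?_⟩
      show QuotientAddGroup.mk y = QuotientAddGroup.mk r
      rw [QuotientAddGroup.eq]
      rw [← hyz]
      simpa using hz
    · rintro ⟨⟨y, hy⟩, hyx⟩
      have hyx' : (QuotientAddGroup.mk y : R ⧸ N) = QuotientAddGroup.mk r := hyx
      show χ (QuotientAddGroup.mk r) = 0
      rw [← hyx', hχdef, QuotientAddGroup.map_mk]
      rw [QuotientAddGroup.eq_zero_iff]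
      have : y ∈ (smulTop n S).comap g := by
        rw [hsup]
        exact le_sup_left (α := AddSubgroup R) (a := K) (b := N) hy
      exact this
  have hφker : Nat.card φ.ker = Nat.card (↥(K ⊓ N)) := by
    have : φ.ker = (K ⊓ N).addSubgroupOf K := by
      ext ⟨x, hx⟩
      show (QuotientAddGroup.mk x : R ⧸ N) = 0 ↔ x ∈ K ⊓ N
      rw [QuotientAddGroup.eq_zero_iff]
      exact ⟨fun h => ⟨hx, h⟩, fun h => h.2⟩
    rw [this]
    exact Nat.card_congr (addSubgroupOfEquivOfLe inf_le_left).toEquiv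
  have hχrange : Nat.card χ.range = Nat.card (S ⧸ smulTop n S) := by
    rw [AddMonoidHom.range_eq_top.mpr hχsurj]
    exact Nat.card_congr AddSubgroup.topEquiv.toEquiv
  have eq1 : Nat.card (R ⧸ N) = Nat.card (S ⧸ smulTop n S) * Nat.card φ.range := by
    rw [card_eq_range_mul_ker χ, hχrange, hχker]
  have eq2 : Nat.card K = Nat.card φ.range * Nat.card (↥(K ⊓ N)) := by
    rw [card_eq_range_mul_ker φ, hφker]
  have eq3 : Nat.card (nTorsion n S) * Nat.card K
      = Nat.card (↥(K ⊓ N)) * Nat.card (nTorsion n R) := eqP1 ▸ eqP2 ▸ rfl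
  have hKpos : 0 < Nat.card K := Nat.card_pos
  refine Nat.eq_of_mul_eq_mul_right hKpos ?_
  calc Nat.card (R ⧸ N) * Nat.card (nTorsion n S) * Nat.card K
      = Nat.card (S ⧸ smulTop n S) * Nat.card φ.range
          * (Nat.card (nTorsion n S) * Nat.card K) := by rw [eq1]; ring
    _ = Nat.card (S ⧸ smulTop n S) * Nat.card φ.range
          * (Nat.card (↥(K ⊓ N)) * Nat.card (nTorsion n R)) := by rw [eq3]
    _ = Nat.card (S ⧸ smulTop n S) * Nat.card (nTorsion n R)
          * (Nat.card φ.range * Nat.card (↥(K ⊓ N))) := by ring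
    _ = Nat.card (S ⧸ smulTop n S) * Nat.card (nTorsion n R) * Nat.card K := by rw [← eq2]

/-- Torsion of a product. -/
def torsionProdEquiv : nTorsion n (A × B) ≃ nTorsion n A × nTorsion n B where
  toFun x := (⟨x.1.1, congrArg Prod.fst x.2⟩, ⟨x.1.2, congrArg Prod.snd x.2⟩)
  invFun y := ⟨(y.1.1, y.2.1), Prod.ext y.1.2 y.2.2⟩
  left_inv x := rfl
  right_inv y := rfl

/-- Torsion of a finite power. -/
def torsionPiEquiv (ι : Type*) : nTorsion n (ι → A) ≃ (ι → nTorsion n A) where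
  toFun x i := ⟨x.1 i, congrFun x.2 i⟩
  invFun y := ⟨fun i => (y i).1, funext fun i => (y i).2⟩
  left_inv x := rfl
  right_inv y := rfl

/-- Quotient mod `n` of a product. -/
noncomputable def quotProdEquiv :
    ((A × B) ⧸ smulTop n (A × B)) ≃+ (A ⧸ smulTop n A) × (B ⧸ smulTop n B) := by
  set h : A × B →+ (A ⧸ smulTop n A) × (B ⧸ smulTop n B) :=
    (QuotientAddGroup.mk' (smulTop n A)).prodMap (QuotientAddGroup.mk' (smulTop n B)) with hh
  have hker : smulTop n (A × B) = h.ker := by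
    ext ⟨x1, x2⟩
    constructor
    · rintro ⟨⟨y1, y2⟩, hy⟩
      have h1' : n • y1 = x1 := congrArg Prod.fst hy
      have h2' : n • y2 = x2 := congrArg Prod.snd hy
      subst h1'; subst h2'
      show ((QuotientAddGroup.mk (n • y1) : A ⧸ smulTop n A),
        (QuotientAddGroup.mk (n • y2) : B ⧸ smulTop n B)) = 0
      rw [Prod.ext_iff]
      exact ⟨(QuotientAddGroup.eq_zero_iff _).mpr ⟨y1, rfl⟩,
        (QuotientAddGroup.eq_zero_iff _).mpr ⟨y2, rfl⟩⟩
    · intro hx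
      have h1 : (QuotientAddGroup.mk x1 : A ⧸ smulTop n A) = 0 :=
        congrArg Prod.fst hx
      have h2 : (QuotientAddGroup.mk x2 : B ⧸ smulTop n B) = 0 :=
        congrArg Prod.snd hx
      obtain ⟨y1, hy1⟩ := (QuotientAddGroup.eq_zero_iff _).mp h1
      obtain ⟨y2, hy2⟩ := (QuotientAddGroup.eq_zero_iff _).mp h2
      exact ⟨(y1, y2), Prod.ext hy1 hy2⟩
  have hsurj : Function.Surjective h :=
    (QuotientAddGroup.mk'_surjective _).prodMap (QuotientAddGroup.mk'_surjective _)
  exact (QuotientAddGroup.quotientAddEquivOfEq hker).trans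
    (QuotientAddGroup.quotientKerEquivOfSurjective h hsurj)

/-- The componentwise quotient map on a power. -/
def piMk (ι : Type*) : (ι → A) →+ (ι → A ⧸ smulTop n A) where
  toFun x i := QuotientAddGroup.mk (x i)
  map_zero' := rfl
  map_add' x y := rfl

/-- Quotient mod `n` of a finite power. -/
noncomputable def quotPiEquiv (ι : Type*) :
    ((ι → A) ⧸ smulTop n (ι → A)) ≃+ (ι → A ⧸ smulTop n A) := by
  have hker : smulTop n (ι → A) = (piMk n ι).ker := by
    ext x
    constructor
    · rintro ⟨y, rfl⟩
      show (fun i => (QuotientAddGroup.mk (n • y i) : A ⧸ smulTop n A)) = 0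
      funext i
      exact (QuotientAddGroup.eq_zero_iff _).mpr ⟨y i, rfl⟩
    · intro hx
      have : ∀ i, ∃ y, n • y = x i := fun i =>
        (QuotientAddGroup.eq_zero_iff _).mp (congrFun hx i)
      exact ⟨fun i => (this i).choose, funext fun i => (this i).choose_spec⟩
  have hsurj : Function.Surjective (piMk n ι (A := A)) := by
    intro y
    exact ⟨fun i => (QuotientAddGroup.mk_surjective (y i)).choose,
      funext fun i => (QuotientAddGroup.mk_surjective (y i)).choose_spec⟩
  exact (QuotientAddGroup.quotientAddEquivOfEq hker).trans
    (QuotientAddGroup.quotientKerEquivOfSurjective _ hsurj)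

end Stmt17Aux

/-- Ono's lemma counting argument. Given `0 → F → R → T^m × T₀ → 0` exact with `F`
finite, if the torsion/quotient counting ratio of `R` is `n^{-a}` and that of `T₀` is `n^{-b}`
with `b ≤ a` and `m ∣ a - b`, then the ratio for `T` is `n^{-(a-b)/m}`
(all ratios stated multiplicatively). -/
theorem stmt_17 {F R T T₀ : Type}
    [AddCommGroup F] [AddCommGroup R] [AddCommGroup T] [AddCommGroup T₀] [Finite F]
    (m : ℕ) (hm : 0 < m)
    (f : F →+ R) (g : R →+ (Fin m → T) × T₀)
    (hf : Function.Injective f) (hg : Function.Surjective g) (hex : f.range = g.ker)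
    (n : ℕ) (hn : 0 < n)
    (hTt : Finite (nTorsion n T)) (hTq : Finite (T ⧸ smulTop n T))
    (hT0t : Finite (nTorsion n T₀)) (hT0q : Finite (T₀ ⧸ smulTop n T₀))
    (hRt : Finite (nTorsion n R)) (hRq : Finite (R ⧸ smulTop n R))
    (a b : ℕ) (hab : b ≤ a) (hdvd : m ∣ a - b)
    (hR : Nat.card (R ⧸ smulTop n R) = Nat.card (nTorsion n R) * n ^ a)
    (hT0 : Nat.card (T₀ ⧸ smulTop n T₀) = Nat.card (nTorsion n T₀) * n ^ b) :
    Nat.card (T ⧸ smulTop n T) = Nat.card (nTorsion n T) * n ^ ((a - b) / m) :=  by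
  classical
  open Stmt17Aux in
  obtain ⟨k, hk⟩ := hdvd
  have hkdiv : (a - b) / m = k := by rw [hk]; exact Nat.mul_div_cancel_left k hm
  have hka : a = b + m * k := by omega
  -- cardinalities on the S side
  set S := (Fin m → T) × T₀
  have eTors : nTorsion n S ≃ (Fin m → nTorsion n T) × nTorsion n T₀ :=
    (torsionProdEquiv n).trans (Equiv.prodCongr (torsionPiEquiv n (Fin m)) (Equiv.refl _))
  have eQuot : (S ⧸ smulTop n S) ≃ (Fin m → T ⧸ smulTop n T) × (T₀ ⧸ smulTop n T₀) :=
    (quotProdEquiv n).toEquiv.trans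
      (Equiv.prodCongr (quotPiEquiv n (Fin m)).toEquiv (Equiv.refl _))
  haveI : Finite (nTorsion n S) := Finite.of_equiv _ eTors.symm
  haveI : Finite (S ⧸ smulTop n S) := Finite.of_equiv _ eQuot.symm
  have hcTors : Nat.card (nTorsion n S)
      = Nat.card (nTorsion n T) ^ m * Nat.card (nTorsion n T₀) := by
    rw [Nat.card_congr eTors, Nat.card_prod, Nat.card_fun, Nat.card_eq_fintype_card (α := Fin m),
      Fintype.card_fin]
  have hcQuot : Nat.card (S ⧸ smulTop n S)
      = Nat.card (T ⧸ smulTop n T) ^ m * Nat.card (T₀ ⧸ smulTop n T₀) := by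
    rw [Nat.card_congr eQuot, Nat.card_prod, Nat.card_fun, Nat.card_eq_fintype_card (α := Fin m),
      Fintype.card_fin]
  have hstar := star f g hg hex n
  rw [hcTors, hcQuot, hR, hT0] at hstar
  -- now pure arithmetic
  set u := Nat.card (nTorsion n T)
  set v := Nat.card (T ⧸ smulTop n T)
  set w := Nat.card (nTorsion n T₀)
  set r := Nat.card (nTorsion n R)
  have hrpos : 0 < r := Nat.card_pos
  have hwpos : 0 < w := Nat.card_pos
  have hnbpos : 0 < n ^ b := Nat.pow_pos hn
  have key : (u * n ^ k) ^ m * (r * w * n ^ b) = v ^ m * (r * w * n ^ b) := by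
    calc (u * n ^ k) ^ m * (r * w * n ^ b)
        = r * (n ^ b * n ^ (m * k)) * (u ^ m * w) := by
          rw [mul_pow, ← pow_mul, mul_comm k m]; ring
      _ = r * n ^ a * (u ^ m * w) := by rw [← pow_add, ← hka]
      _ = v ^ m * (w * n ^ b) * r := hstar
      _ = v ^ m * (r * w * n ^ b) := by ring
  have hposden : 0 < r * w * n ^ b := by positivity
  have hpow : (u * n ^ k) ^ m = v ^ m := Nat.eq_of_mul_eq_mul_right hposden key
  have := Nat.pow_left_injective hm.ne' hpow
  rw [hkdiv]
  exact this.symm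
end
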